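/- Let k be a field of characteristic 2, n ≥ 2, and A ∈ GL(n,k). Suppose A² = c²·Id for some nonzero c ∈ k and A ≠ c·Id. Then there exist an integer m with 1 ≤ m ≤ n/2 and C ∈ GL(n,k) such that C·A·C⁻¹ = L_{m,c²,c}. -/

import Mathlib

/-- The n×n block-diagonal matrix L_{m,c²,c}: the first m diagonal 2×2 blocks
are !![0,1;c²,0] and the remaining n−2m diagonal entries equal c. -/
def Lmc {k : Type*} [Field k] (n m : ℕ) (c : k) : Matrix (Fin n) (Fin n) k :=
  Matrix.of fun i j =>
    if (i : ℕ) < 2 * m then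
      if (i : ℕ) % 2 = 0 ∧ (j : ℕ) = (i : ℕ) + 1 then 1
      else if (i : ℕ) % 2 = 1 ∧ (j : ℕ) + 1 = (i : ℕ) then c ^ 2
      else 0
    else if j = i then c else 0

set_option maxHeartbeats 1000000 in
open Module Submodule LinearMap Matrix in
lemma exists_adapted_basis {k : Type*} [Field k] {n : ℕ} (N : Matrix (Fin n) (Fin n) k)
    (hsq : N * N = 0) (hNne : N ≠ 0) :
    ∃ m : ℕ, 1 ≤ m ∧ 2 * m ≤ n ∧ ∃ b : Basis (Fin n) k (Fin n → k),
      (∀ j : Fin n, 2 * m ≤ (j : ℕ) → N *ᵥ b j = 0) ∧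
      (∀ j : Fin n, (j : ℕ) % 2 = 0 → (j : ℕ) < 2 * m → N *ᵥ b j = 0) ∧
      (∀ j js : Fin n, (js : ℕ) = (j : ℕ) + 1 → (j : ℕ) % 2 = 0 → (j : ℕ) < 2 * m →
        N *ᵥ b js = b j) := by
  classical
  set f : (Fin n → k) →ₗ[k] (Fin n → k) := N.mulVecLin with hf
  have hff : ∀ x, f (f x) = 0 := by
    intro x
    have h0 : (N * N).mulVecLin = (0 : (Fin n → k) →ₗ[k] (Fin n → k)) := by
      rw [hsq, Matrix.mulVecLin_zero]
    calc f (f x) = (N * N).mulVecLin x := by rw [Matrix.mulVecLin_mul]; rfl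
    _ = 0 := by rw [h0]; rfl
  have hRK : range f ≤ ker f := by
    rintro x ⟨y, rfl⟩
    exact hff y
  set m := finrank k (range f) with hm
  have hrk : m + finrank k (ker f) = n := by
    simpa [Module.finrank_fin_fun] using f.finrank_range_add_finrank_ker
  have hm1 : 1 ≤ m := by
    by_contra hcon
    have hm0 : m = 0 := by omega
    have hbot : range f = ⊥ := Submodule.finrank_eq_zero.mp hm0
    have hf0 : f = 0 := LinearMap.range_eq_bot.mp hbot
    apply hNne
    ext i j
    have h2 : N *ᵥ Pi.single j 1 = 0 := by
      show f (Pi.single j 1) = 0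
      rw [hf0]; rfl
    have := congrFun h2 i
    simpa [Matrix.mulVec_single] using this
  obtain ⟨W, hW⟩ := (ker f).exists_isCompl
  have hWdim : finrank k W = m := by
    have h := Submodule.finrank_add_eq_of_isCompl hW
    rw [Module.finrank_fin_fun] at h
    omega
  obtain ⟨T, hT⟩ := (range f).exists_isCompl
  set U : Submodule k (Fin n → k) := T ⊓ ker f with hU
  have hUker : U ≤ ker f := inf_le_right
  have hRU : Disjoint (range f) U := hT.disjoint.mono_right inf_le_left
  have hsupRU : range f ⊔ U = ker f := by
    have h1 : (range f ⊔ T) ⊓ ker f = range f ⊔ (T ⊓ ker f) := sup_inf_assoc_of_le T hRK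
    rw [hT.codisjoint.eq_top, top_inf_eq] at h1
    exact h1.symm
  have hmle : m ≤ finrank k (ker f) := by
    rw [← hsupRU]
    exact Submodule.finrank_mono le_sup_left
  have h2mn : 2 * m ≤ n := by omega
  have hUdim : finrank k U = n - 2 * m := by
    have h := Submodule.finrank_sup_add_finrank_inf_eq (range f) U
    rw [hsupRU, hRU.eq_bot, finrank_bot] at h
    omega
  set bW : Basis (Fin m) k W := Module.finBasisOfFinrankEq k W hWdim with hbW
  set bU : Basis (Fin (n - 2 * m)) k U := Module.finBasisOfFinrankEq k U hUdim with hbU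
  set g : ((Fin m ⊕ Fin (n - 2 * m)) ⊕ Fin m) → (Fin n → k) :=
    Sum.elim
      (Sum.elim (fun i => f ((bW i : W) : Fin n → k)) (fun j => ((bU j : U) : Fin n → k)))
      (fun i => ((bW i : W) : Fin n → k)) with hg
  have hWcoefs : ∀ coef : Fin m → k,
      (∑ i : Fin m, coef i • ((bW i : W) : Fin n → k)) = 0 → ∀ i, coef i = 0 := by
    intro coef h0
    have hcoe : ((∑ i : Fin m, coef i • bW i : W) : Fin n → k) = 0 := by
      push_cast
      exact h0
    have hzero : (∑ i : Fin m, coef i • bW i : W) = 0 :=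
      (ZeroMemClass.coe_eq_zero).mp hcoe
    exact Fintype.linearIndependent_iff.mp bW.linearIndependent coef hzero
  have hUcoefs : ∀ coef : Fin (n - 2 * m) → k,
      (∑ j, coef j • ((bU j : U) : Fin n → k)) = 0 → ∀ j, coef j = 0 := by
    intro coef h0
    have hcoe : ((∑ j, coef j • bU j : U) : Fin n → k) = 0 := by
      push_cast
      exact h0
    have hzero : (∑ j, coef j • bU j : U) = 0 :=
      (ZeroMemClass.coe_eq_zero).mp hcoe
    exact Fintype.linearIndependent_iff.mp bU.linearIndependent coef hzero
  have hli : LinearIndependent k g := by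
    rw [Fintype.linearIndependent_iff]
    intro coef hsum
    set S1 : Fin n → k :=
      ∑ i : Fin m, coef (Sum.inl (Sum.inl i)) • f ((bW i : W) : Fin n → k) with hS1
    set S2 : Fin n → k :=
      ∑ j, coef (Sum.inl (Sum.inr j)) • ((bU j : U) : Fin n → k) with hS2
    set S3 : Fin n → k :=
      ∑ i : Fin m, coef (Sum.inr i) • ((bW i : W) : Fin n → k) with hS3
    have hsum' : S1 + S2 + S3 = 0 := by
      rw [← hsum]
      rw [Fintype.sum_sum_type, Fintype.sum_sum_type]
      simp only [hg, Sum.elim_inl, Sum.elim_inr]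
      rfl
    set w1 : Fin n → k :=
      ∑ i : Fin m, coef (Sum.inl (Sum.inl i)) • ((bW i : W) : Fin n → k) with hw1
    have hfw1 : f w1 = S1 := by
      rw [hw1, hS1, map_sum]
      simp only [_root_.map_smul]
    have hS12ker : S1 + S2 ∈ ker f := by
      rw [LinearMap.mem_ker, map_add, ← hfw1, hff]
      have : S2 ∈ ker f := hUker (Submodule.sum_mem _ (fun j _ =>
        Submodule.smul_mem _ _ (bU j).2))
      rw [LinearMap.mem_ker] at this
      rw [this, zero_add]
    have hS3W : S3 ∈ W :=
      Submodule.sum_mem _ (fun i _ => Submodule.smul_mem _ _ (bW i).2)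
    have hS3ker : S3 ∈ ker f := by
      have h3 : S3 = -(S1 + S2) := by
        have := hsum'
        linear_combination (norm := abel) this
      rw [h3]
      exact neg_mem hS12ker
    have hS30 : S3 = 0 := Submodule.disjoint_def.mp hW.disjoint S3 hS3ker hS3W
    have hS120 : S1 + S2 = 0 := by
      rw [hS30, add_zero] at hsum'
      exact hsum'
    have hS2U : S2 ∈ U := Submodule.sum_mem _ (fun j _ => Submodule.smul_mem _ _ (bU j).2)
    have hS2R : S2 ∈ range f := by
      have h2 : S2 = f (-w1) := by
        rw [map_neg, hfw1]
        linear_combination (norm := abel) hS120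
      rw [h2]
      exact LinearMap.mem_range_self f _
    have hS20 : S2 = 0 := Submodule.disjoint_def.mp hRU S2 hS2R hS2U
    have hS10 : S1 = 0 := by
      rw [hS20, add_zero] at hS120
      exact hS120
    have hw10 : w1 = 0 := by
      have hwker : w1 ∈ ker f := by
        rw [LinearMap.mem_ker, hfw1, hS10]
      have hwW : w1 ∈ W :=
        Submodule.sum_mem _ (fun i _ => Submodule.smul_mem _ _ (bW i).2)
      exact Submodule.disjoint_def.mp hW.disjoint w1 hwker hwW
    have hc1 := hWcoefs _ hw10
    have hc2 := hUcoefs _ hS20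
    have hc3 := hWcoefs _ hS30
    rintro ((i | j) | i)
    · exact hc1 i
    · exact hc2 j
    · exact hc3 i
  haveI : Nonempty ((Fin m ⊕ Fin (n - 2 * m)) ⊕ Fin m) :=
    ⟨Sum.inr ⟨0, by omega⟩⟩
  have hcard : Fintype.card ((Fin m ⊕ Fin (n - 2 * m)) ⊕ Fin m)
      = finrank k (Fin n → k) := by
    simp [Module.finrank_fin_fun]
    omega
  obtain ⟨b0, hb0coe⟩ : ∃ b0 : Basis ((Fin m ⊕ Fin (n - 2 * m)) ⊕ Fin m) k (Fin n → k),
      ∀ s, b0 s = g s :=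
    ⟨basisOfLinearIndependentOfCardEqFinrank hli hcard, fun s => by
      rw [coe_basisOfLinearIndependentOfCardEqFinrank]⟩
  have hNg : ∀ x, N *ᵥ x = f x := fun x => (Matrix.mulVecLin_apply _ _).symm
  have hker0 : ∀ s, N *ᵥ b0 (Sum.inl s) = 0 := by
    rintro (i | j)
    · rw [hb0coe, hNg]
      show f (f _) = 0
      exact hff _
    · rw [hb0coe, hNg]
      have := hUker (bU j).2
      rw [LinearMap.mem_ker] at this
      exact this
  have hpair0 : ∀ i, N *ᵥ b0 (Sum.inr i) = b0 (Sum.inl (Sum.inl i)) := by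
    intro i
    rw [hb0coe, hb0coe, hNg]
    rfl
  clear hb0coe hNg hli hWcoefs hUcoefs hcard this
  clear hg
  clear g
  clear hbW hbU
  clear bW bU
  clear hUdim hWdim hUker hRU hsupRU hmle hU
  clear U
  clear hW hT
  clear W T
  clear hRK hff hrk hm
  clear_value m
  clear hf
  clear f
  clear hsq hNne
  refine ⟨m, hm1, h2mn, ?_⟩
  set fwd : ((Fin m ⊕ Fin (n - 2 * m)) ⊕ Fin m) → Fin n :=
    Sum.elim
      (Sum.elim (fun i => (⟨2 * (i : ℕ), by have := i.isLt; omega⟩ : Fin n))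
        (fun u => (⟨2 * m + (u : ℕ), by have := u.isLt; omega⟩ : Fin n)))
      (fun i => (⟨2 * (i : ℕ) + 1, by have := i.isLt; omega⟩ : Fin n)) with hfwd
  set inv : Fin n → ((Fin m ⊕ Fin (n - 2 * m)) ⊕ Fin m) := fun j =>
    if h : (j : ℕ) < 2 * m then
      (if h2 : (j : ℕ) % 2 = 0 then Sum.inl (Sum.inl ⟨(j : ℕ) / 2, by omega⟩)
       else Sum.inr ⟨(j : ℕ) / 2, by omega⟩)
    else Sum.inl (Sum.inr ⟨(j : ℕ) - 2 * m, by have := j.isLt; omega⟩) with hinv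
  have hli2 : Function.LeftInverse inv fwd := by
    rintro ((i | u) | i) <;>
      simp only [hfwd, hinv, Sum.elim_inl, Sum.elim_inr]
    · rw [dif_pos (by show 2 * (i : ℕ) < 2 * m; have := i.isLt; omega),
        dif_pos (by show 2 * (i : ℕ) % 2 = 0; omega)]
      congr 2
      apply Fin.ext
      show 2 * (i : ℕ) / 2 = (i : ℕ)
      omega
    · rw [dif_neg (by show ¬(2 * m + (u : ℕ) < 2 * m); omega)]
      congr 2
      apply Fin.ext
      show 2 * m + (u : ℕ) - 2 * m = (u : ℕ)
      omega
    · rw [dif_pos (by show 2 * (i : ℕ) + 1 < 2 * m; have := i.isLt; omega),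
        dif_neg (by show ¬((2 * (i : ℕ) + 1) % 2 = 0); omega)]
      congr 1
      apply Fin.ext
      show (2 * (i : ℕ) + 1) / 2 = (i : ℕ)
      omega
  have hri : Function.RightInverse inv fwd := by
    intro j
    simp only [hinv]
    by_cases h : (j : ℕ) < 2 * m
    · rw [dif_pos h]
      by_cases h2 : (j : ℕ) % 2 = 0
      · rw [dif_pos h2]
        simp only [hfwd, Sum.elim_inl]
        apply Fin.ext
        show 2 * ((j : ℕ) / 2) = (j : ℕ)
        omega
      · rw [dif_neg h2]
        simp only [hfwd, Sum.elim_inr]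
        apply Fin.ext
        show 2 * ((j : ℕ) / 2) + 1 = (j : ℕ)
        omega
    · rw [dif_neg h]
      simp only [hfwd, Sum.elim_inl, Sum.elim_inr]
      apply Fin.ext
      show 2 * m + ((j : ℕ) - 2 * m) = (j : ℕ)
      have := j.isLt
      omega
  set sig : ((Fin m ⊕ Fin (n - 2 * m)) ⊕ Fin m) ≃ Fin n := ⟨fwd, inv, hli2, hri⟩ with hsig
  have hbval : ∀ s, (b0.reindex sig) (sig s) = b0 s := by
    intro s
    rw [Basis.reindex_apply, sig.symm_apply_apply]
  refine ⟨b0.reindex sig, ?_, ?_, ?_⟩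
  · intro j hj
    have hjv : j = sig (Sum.inl (Sum.inr ⟨(j : ℕ) - 2 * m, by have := j.isLt; omega⟩)) := by
      apply Fin.ext
      show (j : ℕ) = 2 * m + ((j : ℕ) - 2 * m)
      omega
    rw [hjv, hbval]
    exact hker0 _
  · intro j hj0 hj2
    have hjv : j = sig (Sum.inl (Sum.inl ⟨(j : ℕ) / 2, by omega⟩)) := by
      apply Fin.ext
      show (j : ℕ) = 2 * ((j : ℕ) / 2)
      omega
    rw [hjv, hbval]
    exact hker0 _
  · intro j js hjs hj0 hj2
    have hjv : j = sig (Sum.inl (Sum.inl ⟨(j : ℕ) / 2, by omega⟩)) := by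
      apply Fin.ext
      show (j : ℕ) = 2 * ((j : ℕ) / 2)
      omega
    have hjsv : js = sig (Sum.inr ⟨(j : ℕ) / 2, by omega⟩) := by
      apply Fin.ext
      show (js : ℕ) = 2 * ((j : ℕ) / 2) + 1
      omega
    rw [hjv, hjsv, hbval, hbval]
    exact hpair0 _

set_option maxHeartbeats 1000000 in
open Matrix in
/-- Let k be a field of characteristic 2, n ≥ 2, A ∈ GL(n,k)
with A² = c²·Id for some nonzero c ∈ k and A ≠ c·Id. Then there exist
1 ≤ m ≤ n/2 and C ∈ GL(n,k) with C·A·C⁻¹ = L_{m,c²,c}. -/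
theorem stmt_10 {k : Type*} [Field k] [CharP k 2] {n : ℕ} (hn : 2 ≤ n)
    (A : (Matrix (Fin n) (Fin n) k)ˣ) (c : k) (hc : c ≠ 0)
    (hA2 : (A : Matrix (Fin n) (Fin n) k) ^ 2 = c ^ 2 • (1 : Matrix (Fin n) (Fin n) k))
    (hA : (A : Matrix (Fin n) (Fin n) k) ≠ c • (1 : Matrix (Fin n) (Fin n) k)) :
    ∃ m : ℕ, 1 ≤ m ∧ 2 * m ≤ n ∧ ∃ C : (Matrix (Fin n) (Fin n) k)ˣ,
      (C : Matrix (Fin n) (Fin n) k) * (A : Matrix (Fin n) (Fin n) k) *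
        (↑C⁻¹ : Matrix (Fin n) (Fin n) k) = Lmc n m c := by
  classical
  have htwo : (2 : k) = 0 := by
    have := CharP.cast_eq_zero k 2
    exact_mod_cast this
  have keyv : ∀ v : Fin n → k, v + v = 0 := by
    intro v
    rw [← two_smul k v, htwo, zero_smul]
  have keym : ∀ M : Matrix (Fin n) (Fin n) k, M + M = 0 := by
    intro M
    rw [← two_smul k M, htwo, zero_smul]
  set N : Matrix (Fin n) (Fin n) k := (A : Matrix (Fin n) (Fin n) k) + c • 1 with hN
  have hAA : (A : Matrix (Fin n) (Fin n) k) * A = (c * c) • 1 := by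
    calc (A : Matrix (Fin n) (Fin n) k) * A = (A : Matrix (Fin n) (Fin n) k) ^ 2 :=
          (pow_two _).symm
    _ = c ^ 2 • 1 := hA2
    _ = (c * c) • 1 := by rw [pow_two]
  have hNsq : N * N = 0 := by
    have h1 : N * N = ((c * c) • (1 : Matrix (Fin n) (Fin n) k)
        + c • (A : Matrix (Fin n) (Fin n) k))
        + (c • (A : Matrix (Fin n) (Fin n) k) + (c * c) • (1 : Matrix (Fin n) (Fin n) k)) := by
      rw [hN, add_mul, mul_add, mul_add, mul_smul_comm, mul_one, smul_mul_assoc, one_mul,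
        smul_mul_assoc, one_mul, smul_smul, hAA]
    have h2 : ((c * c) • (1 : Matrix (Fin n) (Fin n) k)
        + c • (A : Matrix (Fin n) (Fin n) k))
        + (c • (A : Matrix (Fin n) (Fin n) k) + (c * c) • (1 : Matrix (Fin n) (Fin n) k))
        = (c • (A : Matrix (Fin n) (Fin n) k) + c • (A : Matrix (Fin n) (Fin n) k))
        + ((c * c) • (1 : Matrix (Fin n) (Fin n) k)
          + (c * c) • (1 : Matrix (Fin n) (Fin n) k)) := by abel
    rw [h1, h2, keym, keym, add_zero]
  have hNne : N ≠ 0 := by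
    intro h0
    apply hA
    have h1 : (A : Matrix (Fin n) (Fin n) k) + c • 1 = 0 := by rw [← hN, h0]
    have h2 : (A : Matrix (Fin n) (Fin n) k) = -(c • (1 : Matrix (Fin n) (Fin n) k)) :=
      eq_neg_of_add_eq_zero_left h1
    have h3 : -(c • (1 : Matrix (Fin n) (Fin n) k)) = c • (1 : Matrix (Fin n) (Fin n) k) :=
      neg_eq_of_add_eq_zero_left (keym _)
    rw [h2, h3]
  obtain ⟨m, hm1, h2mn, b, hbig, heven, hpair⟩ := exists_adapted_basis N hNsq hNne
  have hAv : ∀ v : Fin n → k,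
      (A : Matrix (Fin n) (Fin n) k) *ᵥ v = N *ᵥ v + c • v := by
    intro v
    rw [hN, Matrix.add_mulVec, Matrix.smul_mulVec, Matrix.one_mulVec, add_assoc,
      keyv, add_zero]
  set D0 : Matrix (Fin n) (Fin n) k := (Pi.basisFun k (Fin n)).toMatrix ⇑b with hD0
  haveI hinvD0 : Invertible D0 := (Pi.basisFun k (Fin n)).invertibleToMatrix b
  have hD0col : ∀ j : Fin n, D0 *ᵥ Pi.single j 1 = b j := by
    intro j
    funext i
    have h := congrFun (Matrix.mulVec_single D0 j (1 : k)) i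
    rw [h, MulOpposite.op_one, one_smul, Matrix.col_apply, hD0, Module.Basis.toMatrix_apply, Pi.basisFun_repr]
  set E : Matrix (Fin n) (Fin n) k := Matrix.of fun l j =>
    if (l : ℕ) = (j : ℕ) + 1 ∧ (j : ℕ) % 2 = 0 ∧ (j : ℕ) < 2 * m then c else 0 with hE
  have hEE : E * E = 0 := by
    ext i j
    rw [Matrix.mul_apply, Matrix.zero_apply]
    apply Finset.sum_eq_zero
    intro l _
    rw [hE]
    simp only [Matrix.of_apply]
    split_ifs <;> first | (exfalso; omega) | ring
  set T : Matrix (Fin n) (Fin n) k := 1 + E with hT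
  have hTT : T * T = 1 := by
    have h1 : ((1 : Matrix (Fin n) (Fin n) k) + E) * (1 + E) = 1 + (E + E) + E * E := by
      noncomm_ring
    rw [hT, h1, keym, add_zero, hEE, add_zero]
  set Tu : (Matrix (Fin n) (Fin n) k)ˣ := ⟨T, T, hTT, hTT⟩ with hTu
  set Du : (Matrix (Fin n) (Fin n) k)ˣ := (unitOfInvertible D0) * Tu with hDu
  set D : Matrix (Fin n) (Fin n) k := D0 * T with hD
  have hDuval : (Du : Matrix (Fin n) (Fin n) k) = D := rfl
  have hEcol0 : ∀ j : Fin n, ¬((j : ℕ) % 2 = 0 ∧ (j : ℕ) < 2 * m) →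
      E *ᵥ Pi.single j 1 = 0 := by
    intro j hj
    funext l
    have h := congrFun (Matrix.mulVec_single E j (1 : k)) l
    rw [h, MulOpposite.op_one, one_smul, Matrix.col_apply, hE]
    simp only [Matrix.of_apply, Pi.zero_apply]
    rw [if_neg]
    intro hcon
    exact hj ⟨hcon.2.1, hcon.2.2⟩
  have hEcolp : ∀ j js : Fin n, (js : ℕ) = (j : ℕ) + 1 → (j : ℕ) % 2 = 0 → (j : ℕ) < 2 * m →
      E *ᵥ Pi.single j 1 = c • (Pi.single js 1 : Fin n → k) := by
    intro j js hjs h0 h2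
    funext l
    have h := congrFun (Matrix.mulVec_single E j (1 : k)) l
    rw [h, MulOpposite.op_one, one_smul, Matrix.col_apply, hE]
    simp only [Matrix.of_apply, Pi.smul_apply, smul_eq_mul]
    rw [Pi.single_apply]
    by_cases hl : (l : ℕ) = (j : ℕ) + 1
    · rw [if_pos ⟨hl, h0, h2⟩, if_pos (Fin.ext (by omega)), mul_one]
    · rw [if_neg (fun hcon => hl hcon.1), if_neg (fun hcon => hl (by rw [hcon, hjs])), mul_zero]
  have hDcol1 : ∀ j : Fin n, ¬((j : ℕ) % 2 = 0 ∧ (j : ℕ) < 2 * m) →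
      D *ᵥ Pi.single j 1 = b j := by
    intro j hj
    rw [hD, ← Matrix.mulVec_mulVec, hT, Matrix.add_mulVec, Matrix.one_mulVec,
      hEcol0 j hj, add_zero, hD0col]
  have hDcol2 : ∀ j js : Fin n, (js : ℕ) = (j : ℕ) + 1 → (j : ℕ) % 2 = 0 → (j : ℕ) < 2 * m →
      D *ᵥ Pi.single j 1 = b j + c • b js := by
    intro j js hjs h0 h2
    rw [hD, ← Matrix.mulVec_mulVec, hT, Matrix.add_mulVec, Matrix.one_mulVec,
      hEcolp j js hjs h0 h2, Matrix.mulVec_add, Matrix.mulVec_smul, hD0col, hD0col]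
  set L : Matrix (Fin n) (Fin n) k := Lmc n m c with hLdef
  have hLcol1 : ∀ j js : Fin n, (js : ℕ) = (j : ℕ) + 1 → (j : ℕ) % 2 = 0 → (j : ℕ) < 2 * m →
      L *ᵥ Pi.single j 1 = (c ^ 2) • (Pi.single js 1 : Fin n → k) := by
    intro j js hjs h0 h2
    funext l
    have h := congrFun (Matrix.mulVec_single L j (1 : k)) l
    rw [h, MulOpposite.op_one, one_smul, Matrix.col_apply, hLdef]
    simp only [Lmc, Matrix.of_apply, Pi.smul_apply, Pi.single_apply, smul_eq_mul, Fin.ext_iff]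
    split_ifs <;> first | (exfalso; omega) | ring
  have hLcol2 : ∀ j jp : Fin n, (j : ℕ) = (jp : ℕ) + 1 → (jp : ℕ) % 2 = 0 → (jp : ℕ) < 2 * m →
      L *ᵥ Pi.single j 1 = Pi.single jp 1 := by
    intro j jp hj hp0 hp2
    funext l
    have h := congrFun (Matrix.mulVec_single L j (1 : k)) l
    rw [h, MulOpposite.op_one, one_smul, Matrix.col_apply, hLdef]
    simp only [Lmc, Matrix.of_apply, Pi.single_apply, Fin.ext_iff]
    split_ifs <;> first | (exfalso; omega) | ring
  have hLcol3 : ∀ j : Fin n, 2 * m ≤ (j : ℕ) →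
      L *ᵥ Pi.single j 1 = c • (Pi.single j 1 : Fin n → k) := by
    intro j hj
    funext l
    have h := congrFun (Matrix.mulVec_single L j (1 : k)) l
    rw [h, MulOpposite.op_one, one_smul, Matrix.col_apply, hLdef]
    simp only [Lmc, Matrix.of_apply, Pi.smul_apply, Pi.single_apply, smul_eq_mul, Fin.ext_iff]
    split_ifs <;> first | (exfalso; omega) | ring
  have hmain : (A : Matrix (Fin n) (Fin n) k) * D = D * L := by
    have hcol : ∀ j : Fin n,
        (A : Matrix (Fin n) (Fin n) k) *ᵥ (D *ᵥ Pi.single j 1) = D *ᵥ (L *ᵥ Pi.single j 1) := by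
      intro j
      by_cases h2m : 2 * m ≤ (j : ℕ)
      · rw [hDcol1 j (by omega), hLcol3 j h2m, Matrix.mulVec_smul, hDcol1 j (by omega), hAv,
          hbig j h2m, zero_add]
      · push_neg at h2m
        by_cases hpar : (j : ℕ) % 2 = 0
        · set js : Fin n := ⟨(j : ℕ) + 1, by omega⟩ with hjs
          have hjsval : (js : ℕ) = (j : ℕ) + 1 := rfl
          rw [hDcol2 j js hjsval hpar h2m, hLcol1 j js hjsval hpar h2m, Matrix.mulVec_smul,
            hDcol1 js (by rw [hjsval]; omega)]
          rw [Matrix.mulVec_add, Matrix.mulVec_smul, hAv (b j), hAv (b js),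
            heven j hpar h2m, zero_add, hpair j js hjsval hpar h2m]
          rw [smul_add, smul_smul, ← add_assoc, keyv, zero_add, ← pow_two]
        · set jp : Fin n := ⟨(j : ℕ) - 1, by omega⟩ with hjp
          have hj1 : (j : ℕ) = (jp : ℕ) + 1 := by
            show _ = (j : ℕ) - 1 + 1
            omega
          have hp0 : (jp : ℕ) % 2 = 0 := by
            show ((j : ℕ) - 1) % 2 = 0
            omega
          have hp2 : (jp : ℕ) < 2 * m := by
            show (j : ℕ) - 1 < 2 * m
            omega
          rw [hDcol1 j (fun hcon => hpar hcon.1), hLcol2 j jp hj1 hp0 hp2,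
            hDcol2 jp j hj1 hp0 hp2, hAv, hpair jp j hj1 hp0 hp2]
    ext i j
    have hj := congrFun (hcol j) i
    rw [Matrix.mulVec_mulVec, Matrix.mulVec_mulVec] at hj
    have h1 := congrFun (Matrix.mulVec_single ((A : Matrix (Fin n) (Fin n) k) * D) j (1 : k)) i
    have h2 := congrFun (Matrix.mulVec_single (D * L) j (1 : k)) i
    rw [h1, h2, MulOpposite.op_one, one_smul, one_smul, Matrix.col_apply, Matrix.col_apply] at hj
    exact hj
  refine ⟨m, hm1, h2mn, Du⁻¹, ?_⟩
  rw [inv_inv]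
  calc (↑Du⁻¹ : Matrix (Fin n) (Fin n) k) * ↑A * ↑Du
      = ↑Du⁻¹ * ((↑A : Matrix (Fin n) (Fin n) k) * ↑Du) := by rw [mul_assoc]
    _ = (↑Du⁻¹ : Matrix (Fin n) (Fin n) k) * (↑Du * L) := by rw [hDuval, hmain]
    _ = ((↑Du⁻¹ : Matrix (Fin n) (Fin n) k) * ↑Du) * L := by rw [mul_assoc]
    _ = L := by rw [Units.inv_mul, one_mul]
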